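/- Let K be a consistent and deductively closed set of propositional formulas, let {Φ_C, Φ_A, Φ_R} be a credibility partition of the set Φ of all formulas, let B*_K : Φ → 2^Φ be a basic AGM belief revision function, and define B°_K : Φ → 2^Φ by B°_K(φ) = K if φ ∈ Φ_R, B°_K(φ) = B*_K(φ) if φ ∈ Φ_C, and B°_K(φ) = K ∩ B*_K(φ) if φ ∈ Φ_A. Then B°_K is a filtered belief revision function based on K. -/
import Mathlib


/-! Propositional language built from a set of atomic formulas via negation and disjunction. -/

inductive PropForm (α : Type) : Type
  | atom : α → PropForm α
  | neg : PropForm α → PropForm α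
  | or : PropForm α → PropForm α → PropForm α

namespace PropForm

/-- Truth value of a formula under a boolean valuation of the atoms. -/
def eval (v : α → Bool) : PropForm α → Bool
  | atom a => v a
  | neg φ => !(eval v φ)
  | or φ ψ => (eval v φ) || (eval v ψ)

/-- Conjunction, defined from negation and disjunction. -/
def and (φ ψ : PropForm α) : PropForm α := neg (or (neg φ) (neg ψ))

/-- Material implication. -/
def imp (φ ψ : PropForm α) : PropForm α := or (neg φ) ψ

/-- Biconditional. -/
def biimp (φ ψ : PropForm α) : PropForm α := and (imp φ ψ) (imp ψ φ)

/-- A formula is a tautology if it is true under every boolean valuation. -/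
def Tautology (φ : PropForm α) : Prop := ∀ v : α → Bool, eval v φ = true

/-- A formula is a contradiction if it is false under every boolean valuation. -/
def Contradiction (φ : PropForm α) : Prop := ∀ v : α → Bool, eval v φ = false

end PropForm

open PropForm

/-- The PL-deductive closure of `F`: ψ ∈ [F]^PL iff there are φ₁,…,φₙ ∈ F (n ≥ 0) such that
(φ₁ ∧ … ∧ φₙ) → ψ is a tautology (stated via the equivalent curried implication
φ₁ → (φ₂ → ⋯ → ψ)). -/
def Cn (F : Set (PropForm α)) : Set (PropForm α) :=
  {ψ | ∃ l : List (PropForm α), (∀ φ ∈ l, φ ∈ F) ∧ Tautology (l.foldr PropForm.imp ψ)}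

/-- A set of formulas is consistent if its deductive closure is not the set of all formulas. -/
def ConsistentSet (F : Set (PropForm α)) : Prop := Cn F ≠ Set.univ

/-- A set of formulas is deductively closed if it equals its own deductive closure. -/
def DedClosed (F : Set (PropForm α)) : Prop := F = Cn F

/-- A credibility partition of the set of formulas into credible (ΦC), allowable (ΦA) and
rejected (ΦR) formulas. -/
structure CredPartition (ΦC ΦA ΦR : Set (PropForm α)) : Prop where
  disjCA : Disjoint ΦC ΦA
  disjCR : Disjoint ΦC ΦR
  disjAR : Disjoint ΦA ΦR
  cover : ΦC ∪ ΦA ∪ ΦR = Set.univ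
  taut_mem_C : ∀ φ : PropForm α, Tautology φ → φ ∈ ΦC
  C_consistent : ∀ φ ∈ ΦC, ¬ Contradiction φ
  C_equiv_closed : ∀ φ ψ : PropForm α, Tautology (φ.biimp ψ) → φ ∈ ΦC → ψ ∈ ΦC
  A_consistent : ∀ φ ∈ ΦA, ¬ Contradiction φ
  A_equiv_closed : ∀ φ ψ : PropForm α, Tautology (φ.biimp ψ) → φ ∈ ΦA → ψ ∈ ΦA
  contra_mem_R : ∀ φ : PropForm α, Contradiction φ → φ ∈ ΦR

/-- Basic AGM belief revision function based on K: postulates AGM1–AGM6. -/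
structure IsBasicAGM (K : Set (PropForm α)) (B : PropForm α → Set (PropForm α)) : Prop where
  agm1 : ∀ φ : PropForm α, B φ = Cn (B φ)
  agm2 : ∀ φ : PropForm α, φ ∈ B φ
  agm3 : ∀ φ : PropForm α, B φ ⊆ Cn (K ∪ {φ})
  agm4 : ∀ φ : PropForm α, φ.neg ∉ K → Cn (K ∪ {φ}) ⊆ B φ
  agm5 : ∀ φ : PropForm α, B φ = Set.univ ↔ Contradiction φ
  agm6 : ∀ φ ψ : PropForm α, Tautology (φ.biimp ψ) → B φ = B ψ

/-- Filtered belief revision function based on K, relative to a credibility partition. -/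
structure IsFiltered (ΦC ΦA ΦR K : Set (PropForm α))
    (B : PropForm α → Set (PropForm α)) : Prop where
  f1 : ∀ φ ∈ ΦR, B φ = K
  f2a : ∀ φ : PropForm α, φ.neg ∉ K → φ ∈ ΦC → B φ = Cn (K ∪ {φ})
  f2b : ∀ φ : PropForm α, φ.neg ∉ K → φ ∈ ΦA → B φ = K
  f3 : ∀ φ : PropForm α, φ.neg ∈ K → ConsistentSet (B φ) ∧ DedClosed (B φ)
  f3a : ∀ φ : PropForm α, φ.neg ∈ K → φ ∈ ΦC → φ ∈ B φ
  f3b : ∀ φ : PropForm α, φ.neg ∈ K → φ ∈ ΦA →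
    B φ ⊆ K \ {φ.neg} ∧ Cn (B φ ∪ {φ.neg}) = K
  f4 : ∀ φ ψ : PropForm α, Tautology (φ.biimp ψ) → B φ = B ψ


section Helpers
variable {α : Type}

lemma subset_Cn (F : Set (PropForm α)) : F ⊆ Cn F := by
  intro φ h
  refine ⟨[φ], by simpa using h, ?_⟩
  intro v
  simp [List.foldr, PropForm.imp, PropForm.eval]

lemma Cn_mono {F G : Set (PropForm α)} (h : F ⊆ G) : Cn F ⊆ Cn G := by
  rintro ψ ⟨l, hl, ht⟩
  exact ⟨l, fun φ hφ => h (hl φ hφ), ht⟩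

lemma mem_Cn_of_imp {F : Set (PropForm α)} {χ ψ : PropForm α} (h : χ ∈ F)
    (ht : Tautology (PropForm.imp χ ψ)) : ψ ∈ Cn F :=
  ⟨[χ], by simpa using h, ht⟩

lemma mem_Cn_of_imp2 {F : Set (PropForm α)} {χ₁ χ₂ ψ : PropForm α} (h1 : χ₁ ∈ F)
    (h2 : χ₂ ∈ F) (ht : Tautology (PropForm.imp χ₁ (PropForm.imp χ₂ ψ))) : ψ ∈ Cn F :=
  ⟨[χ₁, χ₂], by simp [h1, h2], ht⟩

lemma Cn_univ_of_neg {F : Set (PropForm α)} {φ : PropForm α} (h1 : φ ∈ F)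
    (h2 : φ.neg ∈ F) : Cn F = Set.univ := by
  ext ψ
  simp only [Set.mem_univ, iff_true]
  refine mem_Cn_of_imp2 h1 h2 ?_
  intro v
  simp [PropForm.imp, PropForm.eval]
  cases PropForm.eval v φ <;> simp

lemma taut_biimp_eval {φ ψ : PropForm α} (h : Tautology (φ.biimp ψ)) (v : α → Bool) :
    PropForm.eval v φ = PropForm.eval v ψ := by
  have := h v
  simp [PropForm.biimp, PropForm.and, PropForm.imp, PropForm.eval] at this
  cases hφ : PropForm.eval v φ <;> cases hψ : PropForm.eval v ψ <;> simp_all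

lemma taut_biimp_symm {φ ψ : PropForm α} (h : Tautology (φ.biimp ψ)) :
    Tautology (ψ.biimp φ) := by
  intro v
  have := taut_biimp_eval h v
  simp [PropForm.biimp, PropForm.and, PropForm.imp, PropForm.eval, this]

end Helpers

/-- Proposition 1, (B) ⇒ (A): the function obtained from a basic AGM belief
revision function by filtering through the credibility partition is a filtered belief
revision function. -/
theorem basicAGM_representation_to_filtered {α : Type} [Countable α] [Nonempty α]
    (ΦC ΦA ΦR K : Set (PropForm α)) (hpart : CredPartition ΦC ΦA ΦR)
    (hKcons : ConsistentSet K) (hKded : DedClosed K)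
    (Bs : PropForm α → Set (PropForm α)) (hAGM : IsBasicAGM K Bs)
    (Bo : PropForm α → Set (PropForm α))
    (hBo : ∀ φ : PropForm α,
      (φ ∈ ΦR → Bo φ = K) ∧
      (φ ∈ ΦC → Bo φ = Bs φ) ∧
      (φ ∈ ΦA → Bo φ = K ∩ Bs φ)) :
    IsFiltered ΦC ΦA ΦR K Bo := by
  obtain ⟨hdCA, hdCR, hdAR, hcover, htautC, hCcons, hCeq, hAcons, hAeq, hcontraR⟩ := hpart
  have hclass : ∀ φ : PropForm α, φ ∈ ΦC ∨ φ ∈ ΦA ∨ φ ∈ ΦR := by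
    intro φ
    have : φ ∈ ΦC ∪ ΦA ∪ ΦR := by rw [hcover]; trivial
    simpa [Set.mem_union, or_assoc] using this
  have hBsC : ∀ φ ∈ ΦC, ¬ φ.neg ∈ K → Bs φ = Cn (K ∪ {φ}) := fun φ _ hn =>
    Set.Subset.antisymm (hAGM.agm3 φ) (hAGM.agm4 φ hn)
  have hKsub : ∀ φ : PropForm α, ¬ φ.neg ∈ K → K ⊆ Bs φ := fun φ hn =>
    (Set.subset_union_left.trans (subset_Cn _)).trans (hAGM.agm4 φ hn)
  constructor
  · -- f1
    intro φ hφ; exact (hBo φ).1 hφ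
  · -- f2a
    intro φ hn hφ
    rw [(hBo φ).2.1 hφ, hBsC φ hφ hn]
  · -- f2b
    intro φ hn hφ
    rw [(hBo φ).2.2 hφ]
    exact Set.inter_eq_left.mpr (hKsub φ hn)
  · -- f3
    intro φ _
    rcases hclass φ with hC | hA | hR
    · rw [(hBo φ).2.1 hC]
      constructor
      · unfold ConsistentSet
        rw [← hAGM.agm1 φ]
        intro h
        exact hCcons φ hC ((hAGM.agm5 φ).mp h)
      · exact hAGM.agm1 φ
    · rw [(hBo φ).2.2 hA]
      have hsub : Cn (K ∩ Bs φ) ⊆ K ∩ Bs φ := by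
        intro ψ hψ
        constructor
        · have : Cn (K ∩ Bs φ) ⊆ Cn K := Cn_mono Set.inter_subset_left
          rw [← hKded] at this
          exact this hψ
        · have : Cn (K ∩ Bs φ) ⊆ Cn (Bs φ) := Cn_mono Set.inter_subset_right
          rw [← hAGM.agm1 φ] at this
          exact this hψ
      constructor
      · unfold ConsistentSet
        intro h
        apply hKcons
        apply Set.eq_univ_of_univ_subset
        exact h ▸ (Cn_mono Set.inter_subset_left)
      · exact Set.Subset.antisymm (subset_Cn _) hsub
    · rw [(hBo φ).1 hR]
      exact ⟨hKcons, hKded⟩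
  · -- f3a
    intro φ _ hC
    rw [(hBo φ).2.1 hC]
    exact hAGM.agm2 φ
  · -- f3b
    intro φ hn hA
    rw [(hBo φ).2.2 hA]
    have hnegnot : φ.neg ∉ Bs φ := by
      intro hneg
      have : Cn (Bs φ) = Set.univ := Cn_univ_of_neg (hAGM.agm2 φ) hneg
      rw [← hAGM.agm1 φ] at this
      exact hAcons φ hA ((hAGM.agm5 φ).mp this)
    constructor
    · intro ψ hψ
      exact ⟨hψ.1, fun h => hnegnot (h ▸ hψ.2)⟩
    · apply Set.Subset.antisymm
      · have h1 : (K ∩ Bs φ ∪ {φ.neg}) ⊆ K := by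
          rintro χ (hχ | hχ)
          · exact hχ.1
          · rw [Set.mem_singleton_iff] at hχ; rwa [hχ]
        have := Cn_mono h1
        rwa [← hKded] at this
      · intro ψ hψ
        have himpK : PropForm.imp φ.neg ψ ∈ K := by
          rw [hKded]
          refine mem_Cn_of_imp hψ ?_
          intro v
          simp [PropForm.imp, PropForm.eval]
          cases PropForm.eval v ψ <;> simp
        have himpB : PropForm.imp φ.neg ψ ∈ Bs φ := by
          rw [hAGM.agm1 φ]
          refine mem_Cn_of_imp (hAGM.agm2 φ) ?_
          intro v
          simp [PropForm.imp, PropForm.eval]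
          cases PropForm.eval v φ <;> simp
        refine mem_Cn_of_imp2 (F := K ∩ Bs φ ∪ {φ.neg})
          (χ₁ := PropForm.imp φ.neg ψ) (χ₂ := φ.neg)
          (Or.inl ⟨himpK, himpB⟩) (Or.inr rfl) ?_
        intro v
        simp [PropForm.imp, PropForm.eval]
        cases PropForm.eval v φ <;> cases PropForm.eval v ψ <;> simp
  · -- f4
    intro φ ψ h
    have hsym := taut_biimp_symm h
    have hBs := hAGM.agm6 φ ψ h
    rcases hclass φ with hC | hA | hR
    · have hψC : ψ ∈ ΦC := hCeq φ ψ h hC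
      rw [(hBo φ).2.1 hC, (hBo ψ).2.1 hψC, hBs]
    · have hψA : ψ ∈ ΦA := hAeq φ ψ h hA
      rw [(hBo φ).2.2 hA, (hBo ψ).2.2 hψA, hBs]
    · have hψR : ψ ∈ ΦR := by
        rcases hclass ψ with hC | hA | hRψ
        · exact absurd (hCeq ψ φ hsym hC) (Set.disjoint_right.mp hdCR hR)
        · exact absurd (hAeq ψ φ hsym hA) (Set.disjoint_right.mp hdAR hR)
        · exact hRψ
      rw [(hBo φ).1 hR, (hBo ψ).1 hψR]
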